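/- Let G^{++} = {0} ∪ {x ∈ G : Σ_n α^n(x_n)(t) > 0 for all t ∈ F}. Then G^{++}/(id − γ_*)(G) = G^+/(id − γ_*)(G) in G/(id − γ_*)(G); that is, every element of G^{++} differs from an element of G^+ by an element of (id − γ_*)(G). -/

import Mathlib

open scoped BigOperators

noncomputable section

/-- The open interval `(0,1)` on which the functions of `G₀ = ℤ[t,t⁻¹,(1-t)⁻¹]` live. -/
def I01 : Set ℝ := Set.Ioo 0 1

/-- Membership in `G₀ = ℤ[t,t⁻¹,(1-t)⁻¹]`, viewed as continuous functions on `(0,1)`: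
`f ∈ G₀` iff `f(t) = p(t)/(tᵐ(1-t)ⁿ)` for some integer polynomial `p`. -/
def memG0 (f : I01 → ℝ) : Prop :=
  ∃ (p : Polynomial ℤ) (m n : ℕ),
    ∀ t : I01, f t = (Polynomial.aeval (t : ℝ) p) / ((t : ℝ) ^ m * (1 - (t : ℝ)) ^ n)

/-- The positive cone `G_F⁺ = {f ∈ G₀ : f > 0 on F} ∪ {0}`. -/
def memGFp (F : Set ℝ) (f : I01 → ℝ) : Prop :=
  memG0 f ∧ ((∀ t : I01, (t : ℝ) ∈ F → 0 < f t) ∨ f = 0)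

/-- Membership in `G = ⊕_{n ∈ ℤ} G₀` (finitely supported sequences of elements of `G₀`). -/
def memG (x : ℤ → I01 → ℝ) : Prop :=
  (∀ n : ℤ, memG0 (x n)) ∧ {n : ℤ | x n ≠ 0}.Finite

/-- `Σ_{n ∈ ℤ} αⁿ(xₙ)(t)`, where `α` is multiplication by `t/(1-t)`. -/
def sumAlpha (x : ℤ → I01 → ℝ) (t : I01) : ℝ :=
  ∑ᶠ n : ℤ, ((t : ℝ) / (1 - (t : ℝ))) ^ n * x n t

/-- `Σ_{n ∈ ℤ} xₙ(t)`. -/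
def sumPlain (x : ℤ → I01 → ℝ) (t : I01) : ℝ := ∑ᶠ n : ℤ, x n t

/-- The automorphism `γ₊ : G → G`, `γ₊((xₙ)ₙ) = (α(x_{n+1}))ₙ`. -/
def gammaStar (x : ℤ → I01 → ℝ) : ℤ → I01 → ℝ :=
  fun n t => ((t : ℝ) / (1 - (t : ℝ))) * x (n + 1) t

/-- The positive cone `G⁺` of `G` determined by `F` and `F₁`. -/
def memGplus (F F1 : Set ℝ) (x : ℤ → I01 → ℝ) : Prop :=
  memG x ∧
    (((∀ t : I01, (t : ℝ) ∈ F → 0 < sumAlpha x t) ∧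
      (∀ t : I01, (t : ℝ) ∈ F1 → 0 < sumPlain x t)) ∨ x = 0)

/-- The cone `G⁺⁺ = {0} ∪ {x ∈ G : Σₙ αⁿ(xₙ) > 0 on F}`. -/
def memGpp (F : Set ℝ) (x : ℤ → I01 → ℝ) : Prop :=
  memG x ∧ ((∀ t : I01, (t : ℝ) ∈ F → 0 < sumAlpha x t) ∨ x = 0)

/-- The sequence in `G` supported at `n = 0` with value `a`. -/
def delta0 (a : I01 → ℝ) : ℤ → I01 → ℝ := fun n => if n = 0 then a else 0

namespace S15

lemma tpos (t : I01) : 0 < (t:ℝ) := t.2.1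
lemma tlt (t : I01) : (t:ℝ) < 1 := t.2.2
lemma tne (t : I01) : (t:ℝ) ≠ 0 := ne_of_gt (tpos t)
lemma osp (t : I01) : 0 < 1 - (t:ℝ) := by have := tlt t; linarith
lemma osne (t : I01) : 1 - (t:ℝ) ≠ 0 := ne_of_gt (osp t)
lemma r_pos (t : I01) : 0 < (t:ℝ)/(1-(t:ℝ)) := div_pos (tpos t) (osp t)
lemma r_ne (t : I01) : (t:ℝ)/(1-(t:ℝ)) ≠ 0 := ne_of_gt (r_pos t)

lemma memG0_congr {f g : I01 → ℝ} (h : ∀ t, f t = g t) (hf : memG0 f) : memG0 g := by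
  obtain ⟨p, m, n, hp⟩ := hf
  exact ⟨p, m, n, fun t => (h t) ▸ hp t⟩

lemma memG0_zero : memG0 (0 : I01 → ℝ) := ⟨0, 0, 0, by simp⟩

lemma memG0_add {f g : I01 → ℝ} (hf : memG0 f) (hg : memG0 g) :
    memG0 (fun t => f t + g t) := by
  obtain ⟨p, m, n, hp⟩ := hf
  obtain ⟨q, m', n', hq⟩ := hg
  refine ⟨p * (Polynomial.X ^ m' * (1 - Polynomial.X) ^ n')
      + q * (Polynomial.X ^ m * (1 - Polynomial.X) ^ n), m + m', n + n', fun t => ?_⟩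
  have h1 := tne t; have h2 := osne t
  simp only [hp, hq, map_add, map_mul, map_pow, map_sub, map_one, Polynomial.aeval_X]
  field_simp
  ring_nf
  try exact Or.inl trivial

lemma memG0_neg {f : I01 → ℝ} (hf : memG0 f) : memG0 (fun t => -f t) := by
  obtain ⟨p, m, n, hp⟩ := hf
  exact ⟨-p, m, n, fun t => by simp [hp t, neg_div]⟩

lemma memG0_sub {f g : I01 → ℝ} (hf : memG0 f) (hg : memG0 g) :
    memG0 (fun t => f t - g t) := by
  have := memG0_add hf (memG0_neg hg)
  exact memG0_congr (fun t => by ring) this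

lemma memG0_mul {f g : I01 → ℝ} (hf : memG0 f) (hg : memG0 g) :
    memG0 (fun t => f t * g t) := by
  obtain ⟨p, m, n, hp⟩ := hf
  obtain ⟨q, m', n', hq⟩ := hg
  refine ⟨p * q, m + m', n + n', fun t => ?_⟩
  have h1 := tne t; have h2 := osne t
  simp only [hp, hq, map_mul]
  field_simp
  ring_nf
  try exact Or.inl trivial

lemma memG0_zpow_r (k : ℤ) : memG0 (fun t : I01 => ((t:ℝ)/(1-(t:ℝ))) ^ k) := by
  rcases k with k | k
  · refine ⟨Polynomial.X ^ k, 0, k, fun t => ?_⟩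
    simp [div_pow]
  · refine ⟨(1 - Polynomial.X) ^ (k+1), k + 1, 0, fun t => ?_⟩
    simp only [zpow_negSucc, map_pow, map_sub, map_one, Polynomial.aeval_X]
    rw [div_pow, inv_div]
    simp

lemma memG0_r : memG0 (fun t : I01 => (t:ℝ)/(1-(t:ℝ))) :=
  memG0_congr (fun t => by simp) (memG0_zpow_r 1)

lemma memG0_sum {ι : Type*} (s : Finset ι) (f : ι → I01 → ℝ)
    (h : ∀ i ∈ s, memG0 (f i)) : memG0 (fun t => ∑ i ∈ s, f i t) := by
  classical
  induction s using Finset.induction with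
  | empty => exact memG0_congr (fun t => by simp) memG0_zero
  | insert a s hni ih =>
    have := memG0_add (h a (Finset.mem_insert_self a s))
      (ih (fun i hi => h i (Finset.mem_insert_of_mem hi)))
    exact memG0_congr (fun t => by rw [Finset.sum_insert hni]) this

lemma memG0_continuous {f : I01 → ℝ} (hf : memG0 f) : Continuous f := by
  obtain ⟨p, m, n, hp⟩ := hf
  have : f = fun t : I01 => (Polynomial.aeval (t : ℝ) p) / ((t : ℝ) ^ m * (1 - (t : ℝ)) ^ n) :=
    funext hp
  rw [this]
  refine Continuous.div (p.continuous_aeval.comp continuous_subtype_val) ?_ ?_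
  · exact ((continuous_subtype_val.pow m)).mul
      ((continuous_const.sub continuous_subtype_val).pow n)
  · intro t
    exact mul_ne_zero (pow_ne_zero _ (tne t)) (pow_ne_zero _ (osne t))

lemma memG_zero : memG 0 := ⟨fun _ => memG0_zero, by simp⟩

end S15

open S15 in
/-- `G⁺⁺` and `G⁺` have the same image in `G/(id - γ₊)(G)`: every element of
`G⁺⁺` differs from an element of `G⁺` by an element of `(id - γ₊)(G)` (and conversely). -/
theorem stmt15 (F : Set ℝ) (hFne : F.Nonempty) (hFc : IsClosed F)
    (hFsub : F ⊆ Set.Icc 0 1) (hF0 : (0:ℝ) ∉ F) (hF1 : (1:ℝ) ∉ F)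
    (F1 : Set ℝ) (hF1c : IsClosed F1)
    (hF1sub : F1 ⊆ Set.Icc 0 1) (hF10 : (0:ℝ) ∉ F1) (hF11 : (1:ℝ) ∉ F1)
    (hhalf : ((1/2 : ℝ) ∉ F ∪ F1) ∨ ((1/2 : ℝ) ∈ F ∩ F1)) :
    (∀ x : ℤ → I01 → ℝ, memGpp F x →
      ∃ y : ℤ → I01 → ℝ, memGplus F F1 y ∧
        ∃ z : ℤ → I01 → ℝ, memG z ∧ x - y = z - gammaStar z) ∧
    (∀ y : ℤ → I01 → ℝ, memGplus F F1 y → memGpp F y) := by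
  classical
  constructor
  · rintro x ⟨hxG, hpos | rfl⟩
    swap
    · refine ⟨0, ⟨memG_zero, Or.inr rfl⟩, 0, memG_zero, ?_⟩
      funext n t
      simp [gammaStar]
    -- the support bound
    set s : Finset ℤ := hxG.2.toFinset with hs
    set B : ℕ := s.sup Int.natAbs with hB
    set T : Finset ℤ := Finset.Icc (-(B:ℤ)) (B:ℤ) with hT
    have hBsupp : ∀ n : ℤ, x n ≠ 0 → n ∈ T := by
      intro n hn
      have hns : n ∈ s := (Set.Finite.mem_toFinset _).mpr hn
      have := Finset.le_sup (f := Int.natAbs) hns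
      simp only [hT, Finset.mem_Icc]
      omega
    have hBsupp' : ∀ n : ℤ, n ∉ T → x n = 0 := by
      intro n hn; by_contra h; exact hn (hBsupp n h)
    have h0T : (0:ℤ) ∈ T := by
      simp only [hT, Finset.mem_Icc]
      constructor <;> omega
    -- S = Σ αⁿ xₙ as an element of G₀
    set S : I01 → ℝ := fun t => ∑ k ∈ T, ((t:ℝ)/(1-(t:ℝ)))^k * x k t with hSdef
    have hSsum : ∀ t, sumAlpha x t = S t := by
      intro t
      refine finsum_eq_sum_of_support_subset _ ?_
      intro n hn
      simp only [Function.mem_support] at hn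
      by_contra hnT
      have : x n = 0 := hBsupp' n (by simpa using hnT)
      simp [this] at hn
    have hSG0 : memG0 S :=
      memG0_sum T _ (fun k _ => memG0_mul (memG0_zpow_r k) (hxG.1 k))
    have hSpos : ∀ t : I01, (t:ℝ) ∈ F → 0 < S t := fun t ht => hSsum t ▸ hpos t ht
    -- choice of N
    set q : I01 → ℝ := fun t => (1-2*(t:ℝ))^2/((t:ℝ)*(1-(t:ℝ))^2) with hqdef
    have hq0 : ∀ t : I01, 0 ≤ q t := fun t =>
      div_nonneg (sq_nonneg _) (mul_nonneg (tpos t).le (pow_nonneg (osp t).le 2))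
    have hqpos : ∀ t : I01, (t:ℝ) ≠ 1/2 → 0 < q t := by
      intro t ht
      apply div_pos
      · have h2 : 1 - 2*(t:ℝ) ≠ 0 := by intro h; apply ht; linarith
        positivity
      · exact mul_pos (tpos t) (pow_pos (osp t) 2)
    have hqcont : Continuous q := by
      refine Continuous.div ?_ ?_ ?_
      · exact ((continuous_const.sub (continuous_const.mul continuous_subtype_val))).pow 2
      · exact continuous_subtype_val.mul ((continuous_const.sub continuous_subtype_val).pow 2)
      · intro t; exact ne_of_gt (mul_pos (tpos t) (pow_pos (osp t) 2))
    set K : Set I01 := (Subtype.val ⁻¹' F1) ∩ {t | S t ≤ 0} with hK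
    have hKcpt : IsCompact K := by
      have hF1sub' : F1 ⊆ Set.Ioo (0:ℝ) 1 := by
        intro a ha
        rcases hF1sub ha with ⟨ha1, ha2⟩
        exact ⟨ha1.lt_of_ne (fun h => hF10 (h ▸ ha)), ha2.lt_of_ne (fun h => hF11 (h ▸ ha))⟩
      have hF1cpt : IsCompact F1 := IsCompact.of_isClosed_subset isCompact_Icc hF1c hF1sub
      have hAcpt : IsCompact (Subtype.val ⁻¹' F1 : Set I01) := by
        rw [Subtype.isCompact_iff]
        have him : (Subtype.val '' (Subtype.val ⁻¹' F1 : Set I01)) = F1 := by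
          rw [Set.image_preimage_eq_inter_range, Subtype.range_coe]
          exact Set.inter_eq_left.mpr (fun a ha => hF1sub' ha)
        rw [him]; exact hF1cpt
      exact hAcpt.inter_right (isClosed_le (memG0_continuous hSG0) continuous_const)
    have hqK : ∀ t ∈ K, 0 < q t := by
      intro t ht
      refine hqpos t (fun heq => ?_)
      rcases hhalf with h | h
      · exact h (Set.mem_union_right _ (heq ▸ ht.1))
      · have : 0 < S t := hSpos t (heq ▸ h.1)
        have := ht.2
        simp only [Set.mem_setOf_eq] at this
        linarith
    have hNex : ∃ N : ℕ, ∀ t : I01, (t:ℝ) ∈ F1 → 0 < S t + N * q t := by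
      rcases K.eq_empty_or_nonempty with hKe | hKne
      · refine ⟨0, fun t ht => ?_⟩
        by_contra h
        push_neg at h
        have hSt : S t ≤ 0 := by simpa using h
        have : t ∈ K := ⟨ht, hSt⟩
        simp [hKe] at this
      · obtain ⟨a, haK, ha⟩ := hKcpt.exists_isMinOn hKne hqcont.continuousOn
        obtain ⟨b, hbK, hb⟩ := hKcpt.exists_isMinOn hKne (memG0_continuous hSG0).continuousOn
        obtain ⟨N, hNgt⟩ := exists_nat_gt ((-S b) / q a)
        have hqa : 0 < q a := hqK a haK
        refine ⟨N, fun t ht => ?_⟩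
        by_cases hSt : 0 < S t
        · have : 0 ≤ (N:ℝ) * q t := mul_nonneg (Nat.cast_nonneg N) (hq0 t)
          linarith
        · have htK : t ∈ K := ⟨ht, not_lt.mp hSt⟩
          have h1 : q a ≤ q t := isMinOn_iff.mp ha t htK
          have h2 : S b ≤ S t := isMinOn_iff.mp hb t htK
          have h3 : -S b < N * q a := (div_lt_iff₀ hqa).mp hNgt
          nlinarith [Nat.cast_nonneg (α := ℝ) N]
    obtain ⟨N, hN⟩ := hNex
    -- the correction function g
    set g : I01 → ℝ := fun t => (-(N:ℝ)) * (1-2*(t:ℝ)) / ((t:ℝ)*(1-(t:ℝ))) with hgdef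
    have hgG0 : memG0 g := by
      refine ⟨Polynomial.C (-(N:ℤ)) * (1 - 2*Polynomial.X), 1, 1, fun t => ?_⟩
      simp only [hgdef, map_mul, map_sub, map_one, map_ofNat, Polynomial.aeval_C,
        Polynomial.aeval_X, pow_one]
      push_cast
      ring_nf
    -- x' = x - δ₀(S)
    set x' : ℤ → I01 → ℝ := fun n t => x n t - (if n = 0 then S t else 0) with hx'def
    have hx'T : ∀ n : ℤ, n ∉ T → ∀ t, x' n t = 0 := by
      intro n hn t
      have hn0 : n ≠ 0 := fun h => hn (h ▸ h0T)
      simp [hx'def, hn0, hBsupp' n hn]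
    have hx'G0 : ∀ n : ℤ, memG0 (x' n) := by
      intro n
      rcases eq_or_ne n 0 with rfl | hn0
      · exact memG0_congr (fun t => by simp [hx'def]) (memG0_sub (hxG.1 0) hSG0)
      · exact memG0_congr (fun t => by simp [hx'def, hn0]) (hxG.1 n)
    -- the telescoping sequence z₁
    set z₁ : ℤ → I01 → ℝ :=
      fun n t => ∑ k ∈ Finset.Icc n (B:ℤ), ((t:ℝ)/(1-(t:ℝ))) ^ (k-n) * x' k t with hz₁def
    have htel : ∀ (n : ℤ) (t : I01), z₁ n t - ((t:ℝ)/(1-(t:ℝ))) * z₁ (n+1) t = x' n t := by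
      intro n t
      by_cases hnB : n ≤ (B:ℤ)
      · have hsplit : Finset.Icc n (B:ℤ) = insert n (Finset.Icc (n+1) (B:ℤ)) := by
          ext k
          simp only [Finset.mem_Icc, Finset.mem_insert]
          omega
        have hnotmem : n ∉ Finset.Icc (n+1) (B:ℤ) := by
          simp only [Finset.mem_Icc]; omega
        simp only [hz₁def]
        rw [hsplit, Finset.sum_insert hnotmem, Finset.mul_sum]
        have hterm : ∀ k ∈ Finset.Icc (n+1) (B:ℤ),
            ((t:ℝ)/(1-(t:ℝ))) * (((t:ℝ)/(1-(t:ℝ))) ^ (k-(n+1)) * x' k t)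
              = ((t:ℝ)/(1-(t:ℝ))) ^ (k-n) * x' k t := by
          intro k _
          have hkn : k - n = (k - (n+1)) + 1 := by ring
          rw [hkn, zpow_add_one₀ (r_ne t)]
          ring
        rw [Finset.sum_congr rfl hterm]
        simp
      · have h1 : Finset.Icc n (B:ℤ) = ∅ := Finset.Icc_eq_empty (by omega)
        have h2 : Finset.Icc (n+1) (B:ℤ) = ∅ := Finset.Icc_eq_empty (by omega)
        have hx'n : x' n t = 0 := hx'T n (by simp only [hT, Finset.mem_Icc]; omega) t
        simp [hz₁def, h1, h2, hx'n]
    have hz₁hi : ∀ n : ℤ, (B:ℤ) < n → ∀ t, z₁ n t = 0 := by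
      intro n hn t
      simp [hz₁def, Finset.Icc_eq_empty (by omega : ¬ n ≤ (B:ℤ))]
    have hz₁lo : ∀ n : ℤ, n < -(B:ℤ) → ∀ t, z₁ n t = 0 := by
      intro n hn t
      have hsub : T ⊆ Finset.Icc n (B:ℤ) := by
        intro k hk
        simp only [hT, Finset.mem_Icc] at hk ⊢
        omega
      simp only [hz₁def]
      rw [← Finset.sum_subset hsub (fun k _ hk' => by rw [hx'T k hk' t, mul_zero])]
      have hstep : ∀ k ∈ T, ((t:ℝ)/(1-(t:ℝ))) ^ (k-n) * x' k t
          = ((t:ℝ)/(1-(t:ℝ))) ^ (-n) * (((t:ℝ)/(1-(t:ℝ))) ^ k * x' k t) := by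
        intro k _
        have hkn : k - n = -n + k := by ring
        rw [hkn, zpow_add₀ (r_ne t), mul_assoc]
      rw [Finset.sum_congr rfl hstep, ← Finset.mul_sum]
      have hzero : ∑ k ∈ T, ((t:ℝ)/(1-(t:ℝ))) ^ k * x' k t = 0 := by
        have hsplit : ∀ k ∈ T, ((t:ℝ)/(1-(t:ℝ))) ^ k * x' k t
            = ((t:ℝ)/(1-(t:ℝ))) ^ k * x k t - (if k = 0 then S t else 0) := by
          intro k _
          rcases eq_or_ne k 0 with rfl | hk0
          · simp [hx'def]
            try ring
          · simp [hx'def, hk0]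
        rw [Finset.sum_congr rfl hsplit, Finset.sum_sub_distrib,
          Finset.sum_ite_eq' T 0 (fun _ => S t)]
        simp [h0T, hSdef]
      rw [hzero, mul_zero]
    -- the elements y and z
    set y : ℤ → I01 → ℝ := fun n t =>
      if n = 0 then S t - g t
      else if n = -1 then ((t:ℝ)/(1-(t:ℝ))) * g t else 0 with hydef
    set z : ℤ → I01 → ℝ := fun n t => z₁ n t + (if n = 0 then g t else 0) with hzdef
    have hyG : memG y := by
      constructor
      · intro n
        rcases eq_or_ne n 0 with rfl | hn0
        · exact memG0_congr (fun t => by simp [hydef]) (memG0_sub hSG0 hgG0)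
        rcases eq_or_ne n (-1) with rfl | hn1
        · exact memG0_congr (fun t => by simp [hydef]) (memG0_mul memG0_r hgG0)
        · exact memG0_congr (fun t => by simp [hydef, hn0, hn1]) memG0_zero
      · refine Set.Finite.subset (Set.finite_Icc (-1:ℤ) 0) ?_
        intro n hn
        simp only [Set.mem_setOf_eq] at hn
        by_contra h
        simp only [Set.mem_Icc, not_and_or, not_le] at h
        have hn0 : n ≠ 0 := by omega
        have hn1 : n ≠ -1 := by omega
        exact hn (funext fun t => by simp [hydef, hn0, hn1])
    have hyA : ∀ t : I01, sumAlpha y t = S t := by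
      intro t
      have hsupp : (Function.support fun n : ℤ => ((t:ℝ)/(1-(t:ℝ))) ^ n * y n t)
          ⊆ (({-1, 0} : Finset ℤ) : Set ℤ) := by
        intro n hn
        simp only [Function.mem_support] at hn
        by_contra hmem
        simp only [Finset.coe_insert, Finset.coe_singleton, Set.mem_insert_iff,
          Set.mem_singleton_iff, not_or] at hmem
        exact hn (by simp [hydef, hmem.1, hmem.2])
      rw [sumAlpha, finsum_eq_sum_of_support_subset _ hsupp]
      rw [Finset.sum_insert (by simp), Finset.sum_singleton]
      simp only [hydef, if_pos rfl, reduceIte]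
      norm_num
      have h1 := tne t; have h2 := osne t
      field_simp
      ring
    have hyP : ∀ t : I01, sumPlain y t = S t + N * q t := by
      intro t
      have hsupp : (Function.support fun n : ℤ => y n t)
          ⊆ (({-1, 0} : Finset ℤ) : Set ℤ) := by
        intro n hn
        simp only [Function.mem_support] at hn
        by_contra hmem
        simp only [Finset.coe_insert, Finset.coe_singleton, Set.mem_insert_iff,
          Set.mem_singleton_iff, not_or] at hmem
        exact hn (by simp [hydef, hmem.1, hmem.2])
      rw [sumPlain, finsum_eq_sum_of_support_subset _ hsupp]
      rw [Finset.sum_insert (by simp), Finset.sum_singleton]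
      simp only [hydef, if_pos rfl, reduceIte]
      norm_num
      simp only [hgdef, hqdef]
      have h1 := tne t; have h2 := osne t
      field_simp
      ring
    have hzG : memG z := by
      constructor
      · intro n
        have hz₁G0 : memG0 (z₁ n) :=
          memG0_sum _ _ (fun k _ => memG0_mul (memG0_zpow_r (k-n)) (hx'G0 k))
        rcases eq_or_ne n 0 with rfl | hn0
        · exact memG0_congr (fun t => by simp [hzdef]) (memG0_add hz₁G0 hgG0)
        · exact memG0_congr (fun t => by simp [hzdef, hn0])
            (memG0_add hz₁G0 memG0_zero)
      · refine Set.Finite.subset (T.finite_toSet) ?_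
        intro n hn
        simp only [Set.mem_setOf_eq] at hn
        by_contra h
        have hn0 : n ≠ 0 := fun e => h (by rw [e]; exact_mod_cast h0T)
        have hz₁n : ∀ t, z₁ n t = 0 := by
          have hrange : n < -(B:ℤ) ∨ (B:ℤ) < n := by
            simp only [hT, Finset.coe_Icc, Set.mem_Icc, not_and_or, not_le] at h
            omega
          rcases hrange with h' | h'
          · exact hz₁lo n h'
          · exact hz₁hi n h'
        exact hn (funext fun t => by simp [hzdef, hn0, hz₁n t])
    refine ⟨y, ⟨hyG, Or.inl ⟨fun t ht => by rw [hyA t]; exact hSpos t ht,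
      fun t ht => by rw [hyP t]; exact hN t ht⟩⟩, z, hzG, ?_⟩
    funext n t
    have hsub : (x - y) n t = x n t - y n t := rfl
    have hsub2 : (z - gammaStar z) n t = z n t - ((t:ℝ)/(1-(t:ℝ))) * z (n+1) t := rfl
    rw [hsub, hsub2]
    have hT0 := htel n t
    rcases eq_or_ne n 0 with rfl | hn0
    · have hx'0 : x' 0 t = x 0 t - S t := by simp [hx'def]
      simp only [hzdef, hydef, if_pos rfl]
      norm_num
      rw [hx'0] at hT0
      linarith [hT0]
    rcases eq_or_ne n (-1) with rfl | hn1
    · have hx'1 : x' (-1) t = x (-1) t := by simp [hx'def]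
      simp only [hzdef, hydef]
      norm_num
      rw [hx'1] at hT0
      linarith [hT0]
    · have hx'n : x' n t = x n t := by simp [hx'def, hn0]
      have hn1' : n + 1 ≠ 0 := by omega
      simp only [hzdef, hydef, if_neg hn0, if_neg hn1, if_neg hn1']
      norm_num
      rw [hx'n] at hT0
      linarith [hT0]
  · rintro y ⟨hyG, hy | rfl⟩
    · exact ⟨hyG, Or.inl hy.1⟩
    · exact ⟨memG_zero, Or.inr rfl⟩

end
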